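/- Let x ∈ [0,1]^n with w^T x ≥ b, and suppose x has exactly two fractional components r, q with x_r + x_q = 1 and w_r ≥ w_q > 0. Then the vector x̄ obtained by setting x̄_r = 1 and x̄_q = 0 is in {0,1}^n, satisfies w^T x̄ ≥ b, and for any nonnegative cost vector c with c_r ≥ c_q, c^T x̄ - c^T x ≤ c_r - c_q. -/
import Mathlib


open Finset

/-- Rounding the two fractional components `r, q` (with `x_r + x_q = 1`,
`w_r ≥ w_q`) of a feasible point by setting `x̄_r = 1`, `x̄_q = 0` keeps it
feasible, makes it integral, and increases the cost by at most `c_r - c_q`. -/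
theorem round_two_fractional (n : ℕ) (w c x : Fin n → ℝ) (b : ℝ)
    (hw : ∀ i, 0 < w i) (hc : ∀ i, 0 ≤ c i)
    (hx01 : ∀ i, 0 ≤ x i ∧ x i ≤ 1)
    (hb : b ≤ ∑ i, w i * x i)
    (r q : Fin n) (hrq : r ≠ q)
    (hr : 0 < x r ∧ x r < 1) (hq : 0 < x q ∧ x q < 1)
    (hsum : x r + x q = 1) (hwrq : w q ≤ w r) (hcrq : c q ≤ c r)
    (honly : ∀ i, i ≠ r → i ≠ q → x i = 0 ∨ x i = 1) :
    (∀ i, Function.update (Function.update x r 1) q 0 i = 0 ∨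
          Function.update (Function.update x r 1) q 0 i = 1) ∧
    (b ≤ ∑ i, w i * Function.update (Function.update x r 1) q 0 i) ∧
    (∑ i, c i * Function.update (Function.update x r 1) q 0 i) - (∑ i, c i * x i)
      ≤ c r - c q := by
  set y := Function.update (Function.update x r 1) q 0 with hy
  have hyq : y q = 0 := by simp [hy]
  have hyr : y r = 1 := by simp [hy, Function.update_of_ne hrq]
  have hyo : ∀ i, i ≠ r → i ≠ q → y i = x i := by
    intro i h1 h2
    simp [hy, Function.update_of_ne h2, Function.update_of_ne h1]
  have key : ∀ v : Fin n → ℝ,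
      ∑ i, v i * y i - ∑ i, v i * x i = v r * (1 - x r) - v q * x q := by
    intro v
    rw [← Finset.sum_sub_distrib]
    rw [← Finset.sum_subset (Finset.subset_univ ({r, q} : Finset (Fin n)))]
    · rw [Finset.sum_pair hrq, hyr, hyq]
      ring
    · intro i _ hi
      simp only [Finset.mem_insert, Finset.mem_singleton, not_or] at hi
      rw [hyo i hi.1 hi.2]
      ring
  refine ⟨?_, ?_, ?_⟩
  · intro i
    by_cases h1 : i = q
    · subst h1; left; exact hyq
    · by_cases h2 : i = r
      · subst h2; right; exact hyr
      · rw [hyo i h2 h1]; exact honly i h2 h1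
  · have h := key w
    have h2 : 0 ≤ (w r - w q) * x q := mul_nonneg (by linarith) hq.1.le
    have h3 : w r * (1 - x r) - w q * x q = (w r - w q) * x q := by
      rw [show (1:ℝ) - x r = x q by linarith]; ring
    linarith
  · have h := key c
    have hxr : 1 - x r = x q := by linarith
    rw [h, hxr]
    nlinarith [hq.2, hc q]
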